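/- Let A ⊆ C be a finite extension of commutative rings such that C is a projective A-module. Then the quotient A-module C/A is projective, and the exact sequence 0 → A → C → C/A → 0 of A-modules splits. -/

import Mathlib

theorem stmt18 (A C : Type*) [CommRing A] [CommRing C] [Algebra A C]
    [Module.Finite A C] [Module.Projective A C]
    (hsub : Function.Injective (algebraMap A C)) :
    Module.Projective A (C ⧸ LinearMap.range (Algebra.linearMap A C)) ∧
      ∃ g : (C ⧸ LinearMap.range (Algebra.linearMap A C)) →ₗ[A] C,
        (LinearMap.range (Algebra.linearMap A C)).mkQ ∘ₗ g = LinearMap.id := by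
  haveI hfp : Module.FinitePresentation A C := Module.finitePresentation_of_projective A C
  -- evaluation at 1
  let ev : (C →ₗ[A] A) →ₗ[A] A :=
    { toFun := fun f => f 1
      map_add' := fun f g => rfl
      map_smul' := fun a f => rfl }
  have key : ∃ r : C →ₗ[A] A, r 1 = 1 := by
    have hJ : LinearMap.range ev = ⊤ := by
      by_contra hJ
      obtain ⟨m, hm, hJm⟩ := Ideal.exists_le_maximal _ hJ
      haveI : m.IsPrime := hm.isPrime
      set S := m.primeCompl with hS
      let Aₚ := Localization.AtPrime m
      let Cₚ := LocalizedModule S C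
      haveI : IsLocalRing Aₚ := Localization.AtPrime.isLocalRing m
      haveI : Module.FinitePresentation Aₚ Cₚ := inferInstance
      haveI : Module.Flat Aₚ Cₚ := Module.Flat.localizedModule S
      haveI : Module.Free Aₚ Cₚ := Module.free_of_flat_of_isLocalRing
      set x₁ : Cₚ := LocalizedModule.mkLinearMap S C 1 with hx₁
      have hone : x₁ = (1 : Cₚ) := by with_unfolding_all rfl
      -- 1 is not in m • ⊤
      have h1 : x₁ ∉ (IsLocalRing.maximalIdeal Aₚ) • (⊤ : Submodule Aₚ Cₚ) := by
        intro h1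
        letI : Algebra Aₚ Cₚ := Algebra.ofModule
          (fun (r : Aₚ) (x y : Cₚ) => by
            induction r using Localization.induction_on with | H p =>
            induction x using LocalizedModule.induction_on with | h a s =>
            induction y using LocalizedModule.induction_on with | h b t =>
            rw [LocalizedModule.mk_mul_mk, LocalizedModule.mk_smul_mk, LocalizedModule.mk_smul_mk,
              LocalizedModule.mk_mul_mk, smul_mul_assoc, mul_assoc])
          (fun (r : Aₚ) (x y : Cₚ) => by
            induction r using Localization.induction_on with | H p =>
            induction x using LocalizedModule.induction_on with | h a s =>
            induction y using LocalizedModule.induction_on with | h b t =>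
            rw [LocalizedModule.mk_mul_mk, LocalizedModule.mk_smul_mk, LocalizedModule.mk_smul_mk,
              LocalizedModule.mk_mul_mk, mul_smul_comm, mul_left_comm])
        rw [hone, Ideal.smul_top_eq_map, Submodule.restrictScalars_mem] at h1
        have htop : (IsLocalRing.maximalIdeal Aₚ).map (algebraMap Aₚ Cₚ) = ⊤ :=
          (Ideal.eq_top_iff_one _).mpr h1
        have hbot : (⊤ : Submodule Aₚ Cₚ) = ⊥ := by
          apply Submodule.eq_bot_of_le_smul_of_le_jacobson_bot (IsLocalRing.maximalIdeal Aₚ) ⊤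
            (Module.Finite.fg_top (R := Aₚ) (M := Cₚ))
          · rw [Ideal.smul_top_eq_map, htop]
            simp
          · rw [← IsLocalRing.jacobson_eq_maximalIdeal (⊥ : Ideal Aₚ) bot_ne_top]
        have hz : x₁ = 0 := by
          have : x₁ ∈ (⊤ : Submodule Aₚ Cₚ) := Submodule.mem_top
          rw [hbot, Submodule.mem_bot] at this
          exact this
        obtain ⟨s, hs⟩ := (IsLocalizedModule.eq_zero_iff S (LocalizedModule.mkLinearMap S C)).mp hz
        rw [Submonoid.smul_def, ← Algebra.algebraMap_eq_smul_one] at hs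
        have : (s : A) = 0 := hsub (by rw [hs, map_zero])
        exact s.2 (this ▸ m.zero_mem)
      -- find a coordinate of 1 which is a unit
      let b := Module.Free.chooseBasis Aₚ Cₚ
      obtain ⟨i, hi⟩ : ∃ i, b.repr x₁ i ∉ IsLocalRing.maximalIdeal Aₚ := by
        by_contra hall
        push_neg at hall
        apply h1
        rw [← b.linearCombination_repr x₁, Finsupp.linearCombination_apply, Finsupp.sum]
        exact Submodule.sum_mem _ fun j _ =>
          Submodule.smul_mem_smul (hall j) Submodule.mem_top
      have hunit : IsUnit (b.repr x₁ i) := IsLocalRing.notMem_maximalIdeal.mp hi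
      let fₚ : Cₚ →ₗ[Aₚ] Aₚ := ((hunit.unit⁻¹ : Aₚˣ) : Aₚ) • b.coord i
      have hfₚ : fₚ x₁ = 1 := by
        simp only [fₚ, LinearMap.smul_apply, Module.Basis.coord_apply, smul_eq_mul]
        exact hunit.val_inv_mul
      -- lift fₚ ∘ mk to a map C →ₗ[A] A
      obtain ⟨l, s, hl⟩ := Module.FinitePresentation.exists_lift_of_isLocalizedModule S
        (Algebra.linearMap A Aₚ)
        ((fₚ.restrictScalars A) ∘ₗ LocalizedModule.mkLinearMap S C)
      have heval : algebraMap A Aₚ (l 1) = algebraMap A Aₚ (s : A) := by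
        have h1 := LinearMap.congr_fun hl 1
        simp only [LinearMap.comp_apply, LinearMap.smul_apply, LinearMap.coe_restrictScalars,
          Algebra.linearMap_apply] at h1
        rw [h1, ← hx₁, hfₚ]
        simp [Submonoid.smul_def, Algebra.algebraMap_eq_smul_one]
      obtain ⟨t, ht⟩ := IsLocalization.exists_of_eq (M := S) heval
      have hmem : l 1 ∈ m := hJm ⟨l, rfl⟩
      have hmm : (t : A) * (s : A) ∈ m := ht ▸ m.mul_mem_left _ hmem
      exact S.mul_mem t.2 s.2 hmm
    have h1 : (1 : A) ∈ LinearMap.range ev := hJ ▸ Submodule.mem_top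
    obtain ⟨r, hr⟩ := h1
    exact ⟨r, hr⟩
  obtain ⟨r, hr⟩ := key
  have hralg : ∀ a : A, r (algebraMap A C a) = a := by
    intro a
    rw [Algebra.algebraMap_eq_smul_one, map_smul, hr, smul_eq_mul, mul_one]
  set p : C →ₗ[A] C := LinearMap.id - (Algebra.linearMap A C) ∘ₗ r with hp
  have hker : LinearMap.range (Algebra.linearMap A C) ≤ LinearMap.ker p := by
    rintro _ ⟨a, rfl⟩
    simp [p, hralg a]
  set g : (C ⧸ LinearMap.range (Algebra.linearMap A C)) →ₗ[A] C :=
    Submodule.liftQ _ p hker with hg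
  have hsplit : (LinearMap.range (Algebra.linearMap A C)).mkQ ∘ₗ g = LinearMap.id := by
    apply Submodule.linearMap_qext
    ext c
    simp only [LinearMap.comp_apply, Submodule.mkQ_apply, LinearMap.id_apply, g,
      Submodule.liftQ_apply, p, LinearMap.sub_apply, LinearMap.id_apply]
    rw [Submodule.Quotient.eq]
    have : c - (Algebra.linearMap A C) (r c) - c = -((Algebra.linearMap A C) (r c)) := by ring
    rw [this]
    exact Submodule.neg_mem _ ⟨r c, rfl⟩
  exact ⟨Module.Projective.of_split g (Submodule.mkQ _) hsplit, g, hsplit⟩
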